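/- Let A be a Grothendieck abelian category and B ⊆ A a thick (Serre) subcategory. Then the inclusion B → A admits a right adjoint if and only if B is closed under arbitrary colimits taken in A (equivalently, closed under arbitrary coproducts). -/

import Mathlib

open CategoryTheory CategoryTheory.Limits

universe v u

/-- A Serre (thick) class of objects in an abelian category: it contains the zero objects and
is closed under subobjects, quotients, and extensions. -/
def IsSerreClass {A : Type u} [Category.{v} A] [Abelian A] (P : A → Prop) : Prop :=
  (∀ X : A, IsZero X → P X) ∧
  (∀ ⦃X Y : A⦄ (f : X ⟶ Y), Mono f → P Y → P X) ∧
  (∀ ⦃X Y : A⦄ (f : X ⟶ Y), Epi f → P X → P Y) ∧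
  (∀ S : ShortComplex A, S.ShortExact → P S.X₁ → P S.X₃ → P S.X₂)

namespace Statement2Aux

variable {A : Type u} [Category.{v} A] [Abelian A] [HasColimits A] [HasSeparator A]
variable (P : A → Prop)

/-- The index type of subobjects of `X` lying in `P`. -/
abbrev Idx (X : A) : Type (max u v) := {S : Subobject X // P ((S : A))}

instance (X : A) : Small.{v} (Idx P X) := by
  have : WellPowered.{v} A := HasSeparator.wellPowered
  infer_instance

/-- Family of underlying objects of the subobjects in `P`, indexed by a small type. -/
noncomputable abbrev ff (X : A) : Shrink.{v} (Idx P X) → A :=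
  fun i => ((((equivShrink (Idx P X)).symm i).1 : Subobject X) : A)

/-- The canonical map from the coproduct of all subobjects of `X` in `P` to `X`. -/
noncomputable def φ (X : A) : (∐ ff P X) ⟶ X :=
  Sigma.desc fun i => (((equivShrink (Idx P X)).symm i).1 : Subobject X).arrow

/-- The torsion subobject: the image of `φ`. -/
noncomputable abbrev t (X : A) : A := image (φ P X)

theorem arrow_factors (X : A) (j : Idx P X) :
    ∃ l : ((j.1 : Subobject X) : A) ⟶ t P X, l ≫ image.ι (φ P X) = j.1.arrow := by
  obtain ⟨i0, hi0⟩ : ∃ i0, (equivShrink (Idx P X)).symm i0 = j :=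
    ⟨equivShrink _ j, Equiv.symm_apply_apply _ _⟩
  subst hi0
  exact ⟨Sigma.ι (ff P X) i0 ≫ factorThruImage (φ P X), (Category.assoc _ _ _).trans (by rw [image.fac]; simp [φ])⟩

theorem exists_lift (hP : IsSerreClass P) {Y X : A} (g : Y ⟶ X) (hY : P Y) :
    ∃ l : Y ⟶ t P X, l ≫ image.ι (φ P X) = g := by
  have hIm : P (image g) := hP.2.2.1 (factorThruImage g) inferInstance hY
  have hS : P ((Subobject.mk (image.ι g) : Subobject X) : A) :=
    hP.2.1 (Subobject.underlyingIso (image.ι g)).hom inferInstance hIm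
  obtain ⟨l, hl⟩ := arrow_factors P X ⟨Subobject.mk (image.ι g), hS⟩
  refine ⟨factorThruImage g ≫ (Subobject.underlyingIso (image.ι g)).inv ≫ l, ?_⟩
  simp only [Category.assoc, hl, Subobject.underlyingIso_arrow, image.fac]

theorem P_t (hP : IsSerreClass P)
    (hcl : ∀ (ι : Type v) (f : ι → A), (∀ i, P (f i)) → P (∐ f)) (X : A) :
    P (t P X) :=
  hP.2.2.1 (factorThruImage (φ P X)) inferInstance
    (hcl _ _ fun i => ((equivShrink (Idx P X)).symm i).2)

end Statement2Aux

open Statement2Aux in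
/-- Let `A` be a Grothendieck abelian category (an AB5 abelian category with
a generator) and `B ⊆ A` a thick (Serre) subcategory, given by the class `P` of its objects.
Then the inclusion `B → A` admits a right adjoint if and only if `B` is closed under
arbitrary coproducts taken in `A` (equivalently, arbitrary colimits). -/
theorem statement2 {A : Type u} [Category.{v} A] [Abelian A]
    [HasColimits A] [HasFilteredColimits A] [AB5 A] [HasSeparator A]
    (P : A → Prop) (hP : IsSerreClass P) :
    (ObjectProperty.ι P).IsLeftAdjoint ↔
      (∀ (ι : Type v) (f : ι → A), (∀ i, P (f i)) → P (∐ f)) := by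
  constructor
  · intro h ι f hf
    obtain ⟨R, ⟨adj⟩⟩ := h
    set F := ObjectProperty.ι P with hF
    set c := ∐ f with hc
    let f' : ι → ObjectProperty.FullSubcategory P := fun i => ⟨f i, hf i⟩
    let s : c ⟶ F.obj (R.obj c) :=
      Sigma.desc fun i => F.map ((adj.homEquiv (f' i) c) (Sigma.ι f i))
    have hs : s ≫ adj.counit.app c = 𝟙 c := by
      apply Sigma.hom_ext
      intro i
      simp only [s, colimit.ι_desc_assoc, Cofan.mk_ι_app, Category.comp_id]
      rw [Category.comp_id]
      exact Equiv.symm_apply_apply (adj.homEquiv (f' i) c) (Sigma.ι f i)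
    have : IsSplitEpi (adj.counit.app c) := ⟨⟨⟨s, hs⟩⟩⟩
    exact hP.2.2.1 (adj.counit.app c) inferInstance (R.obj c).property
  · intro hcl
    have ht : ∀ X : A, P (t P X) := P_t P hP hcl
    let e : ∀ (Y : ObjectProperty.FullSubcategory P) (X : A),
        ((ObjectProperty.ι P).obj Y ⟶ X) ≃ (Y ⟶ (⟨t P X, ht X⟩ : ObjectProperty.FullSubcategory P)) :=
      fun Y X =>
      { toFun := fun g => ObjectProperty.homMk (exists_lift P hP g Y.property).choose
        invFun := fun h => h.hom ≫ image.ι (φ P X)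
        left_inv := fun g => (exists_lift P hP _ Y.property).choose_spec
        right_inv := fun h => by
          have := (exists_lift P hP (h.hom ≫ image.ι (φ P X))
            Y.property).choose_spec
          exact ObjectProperty.hom_ext _ ((cancel_mono (image.ι (φ P X))).1 this) }
    have he : ∀ (Y' Y : ObjectProperty.FullSubcategory P) (X : A) (f : Y' ⟶ Y)
        (g : (ObjectProperty.ι P).obj Y ⟶ X),
        e Y' X ((ObjectProperty.ι P).map f ≫ g) = f ≫ e Y X g := by
      intro Y' Y X f g
      apply ObjectProperty.hom_ext
      apply (cancel_mono (image.ι (φ P X))).1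
      have h1 := (exists_lift P hP ((ObjectProperty.ι P).map f ≫ g)
        Y'.property).choose_spec
      have h2 := (exists_lift P hP g Y.property).choose_spec
      show (exists_lift P hP ((ObjectProperty.ι P).map f ≫ g) Y'.property).choose ≫
          image.ι (φ P X) =
        ((ObjectProperty.ι P).map f ≫ (exists_lift P hP g Y.property).choose) ≫
          image.ι (φ P X)
      rw [h1, Category.assoc, h2]
    exact ⟨_, ⟨Adjunction.adjunctionOfEquivRight e he⟩⟩
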